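/- Let G be a finite tree with unit edge lengths having exactly ℓ leaves, let T be a set of targets among its vertices with deadlines d : T → ℕ, and let v be a starting vertex. Then the number of proper covering sets from v is at most |V|^ℓ, where V is the vertex set of G. (Hence, for trees with a fixed number of leaves, the number of proper covering sets is polynomially bounded, which yields a polynomial-time algorithm for SRG-v on such trees.) -/

import Mathlib

set_option linter.unusedSectionVars false

open SimpleGraph

/-- `Q` is a proper covering set from `v` on the graph `G` with unit edge lengths,
targets `T` and deadlines `d`: there is a walk starting at `v` that visits every target
of `Q` within its deadline and passes through no target of `T \ Q`. -/
def TreePCS {V : Type*} (G : SimpleGraph V) (T : Finset V) (d : V → ℕ) (v : V)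
    (Q : Finset V) : Prop :=
  Q ⊆ T ∧ ∃ (m : ℕ) (x : ℕ → V),
    x 0 = v ∧
    (∀ j < m, G.Adj (x j) (x (j + 1))) ∧
    (∀ t ∈ Q, ∃ j, j ≤ m ∧ j ≤ d t ∧ x j = t) ∧
    (∀ j ≤ m, x j ∈ T → x j ∈ Q)

section Aux
variable {V : Type*} [Fintype V] [DecidableEq V] {G : SimpleGraph V} [DecidableRel G.Adj]

/-- A canonical path between two vertices of a connected graph. -/
noncomputable def pth (hG : G.IsTree) (a b : V) : G.Walk a b :=
  (Classical.choice (hG.isConnected.preconnected a b)).bypass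

lemma pth_isPath (hG : G.IsTree) (a b : V) : (pth hG a b).IsPath :=
  SimpleGraph.Walk.bypass_isPath _

lemma eq_pth (hG : G.IsTree) {a b : V} {q : G.Walk a b} (hq : q.IsPath) : q = pth hG a b :=
  congrArg Subtype.val (hG.2.path_unique ⟨q, hq⟩ ⟨pth hG a b, pth_isPath hG a b⟩)

lemma support_pth_subset (hG : G.IsTree) {v : V} {m : ℕ} {x : ℕ → V} (hx0 : x 0 = v)
    (hadj : ∀ j < m, G.Adj (x j) (x (j + 1))) :
    ∀ j, j ≤ m → ∀ w ∈ (pth hG v (x j)).support, w ∈ (Finset.range (m + 1)).image x := by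
  intro j
  induction j with
  | zero =>
    intro _ w hw
    have h1 : ((Walk.nil : G.Walk (x 0) (x 0)).copy hx0 rfl).IsPath := by
      simp [SimpleGraph.Walk.isPath_copy]
    have h2 := eq_pth hG h1
    rw [← h2] at hw
    simp only [Walk.support_copy, Walk.support_nil, List.mem_singleton] at hw
    subst hw
    exact Finset.mem_image.2 ⟨0, by simp, rfl⟩
  | succ j ih =>
    intro hj w hw
    have hjm : j < m := hj
    have hW : ((pth hG v (x j)).concat (hadj j hjm)).bypass.IsPath :=
      SimpleGraph.Walk.bypass_isPath _
    have h2 := eq_pth hG hW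
    rw [← h2] at hw
    have hw' := SimpleGraph.Walk.support_bypass_subset _ hw
    rw [SimpleGraph.Walk.support_concat] at hw'
    rw [List.mem_append, List.mem_singleton] at hw'
    rcases hw' with h | h
    · exact ih (Nat.le_of_lt hjm) w h
    · exact Finset.mem_image.2 ⟨j + 1, by simp [Nat.lt_succ_of_lt, Nat.succ_lt_succ hjm], h.symm⟩

lemma exists_adj_of_two_le (hG : G.IsTree) (hcard : 2 ≤ Fintype.card V) (w : V) :
    ∃ z, G.Adj w z := by
  obtain ⟨w', hw'⟩ := Fintype.exists_ne_of_one_lt_card hcard w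
  obtain ⟨p⟩ := hG.isConnected.preconnected w w'
  cases p with
  | nil => exact absurd rfl hw'
  | cons h q => exact ⟨_, h⟩

lemma extend_to_leaf (hG : G.IsTree) (hcard : 2 ≤ Fintype.card V) {v : V} :
    ∀ (k : ℕ) (w : V) (p : G.Walk w v), p.IsPath → Fintype.card V ≤ p.length + k →
    ∃ (u : V) (q : G.Walk u v), G.degree u = 1 ∧ q.IsPath ∧ ∀ a ∈ p.support, a ∈ q.support := by
  intro k
  induction k with
  | zero =>
    intro w p hp hk
    exfalso
    have h1 : p.support.length ≤ Fintype.card V := hp.support_nodup.length_le_card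
    rw [SimpleGraph.Walk.length_support] at h1
    omega
  | succ k ih =>
    intro w p hp hk
    by_cases hdeg : G.degree w = 1
    · exact ⟨w, p, hdeg, hp, fun a ha => ha⟩
    · obtain ⟨z, hzadj, hzns⟩ : ∃ z, G.Adj w z ∧ z ∉ p.support := by
        cases p with
        | nil =>
          obtain ⟨z, hz⟩ := exists_adj_of_two_le hG hcard v
          refine ⟨z, hz, ?_⟩
          simp only [SimpleGraph.Walk.support_nil, List.mem_singleton]
          exact (G.ne_of_adj hz).symm
        | @cons _ y _ h' p'' =>
          have hp'' : p''.IsPath ∧ w ∉ p''.support := (Walk.cons_isPath_iff h' p'').1 hp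
          have h0 : 0 < G.degree w := by
            rw [← SimpleGraph.card_neighborFinset_eq_degree]
            exact Finset.card_pos.2 ⟨y, (SimpleGraph.mem_neighborFinset G w y).2 h'⟩
          have h2 : 1 < G.degree w := lt_of_le_of_ne h0 (Ne.symm hdeg)
          rw [← SimpleGraph.card_neighborFinset_eq_degree] at h2
          obtain ⟨z, hzmem, hzy⟩ := Finset.exists_mem_ne h2 y
          have hzadj : G.Adj w z := (SimpleGraph.mem_neighborFinset G w z).1 hzmem
          refine ⟨z, hzadj, fun hzin => ?_⟩
          rw [SimpleGraph.Walk.support_cons, List.mem_cons] at hzin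
          rcases hzin with h | hzin
          · exact G.ne_of_adj hzadj h.symm
          · -- z is on p''; derive contradiction with z ≠ y via path uniqueness
            have hr' : (p''.takeUntil z hzin).IsPath := hp''.1.takeUntil hzin
            have hwr' : w ∉ (p''.takeUntil z hzin).support :=
              fun hmem => hp''.2 (SimpleGraph.Walk.support_takeUntil_subset _ hzin hmem)
            have hrpath : (Walk.cons h' (p''.takeUntil z hzin)).IsPath := hr'.cons hwr'
            have hspath : (Walk.cons hzadj Walk.nil).IsPath := by
              simp [SimpleGraph.Walk.cons_isPath_iff, G.ne_of_adj hzadj]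
            have heq : (Walk.cons h' (p''.takeUntil z hzin)) = (Walk.cons hzadj Walk.nil) :=
              (eq_pth hG hrpath).trans (eq_pth hG hspath).symm
            have hsup := congrArg SimpleGraph.Walk.support heq
            simp only [SimpleGraph.Walk.support_cons, SimpleGraph.Walk.support_nil] at hsup
            have : y ∈ (p''.takeUntil z hzin).support := SimpleGraph.Walk.start_mem_support _
            rw [List.cons.injEq] at hsup
            rw [hsup.2] at this
            exact hzy (List.mem_singleton.1 this).symm
      have hpath : (Walk.cons hzadj.symm p).IsPath := hp.cons hzns
      obtain ⟨u, q, h1, h2, h3⟩ := ih z (Walk.cons hzadj.symm p) hpath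
        (by rw [SimpleGraph.Walk.length_cons]; omega)
      exact ⟨u, q, h1, h2, fun a ha => h3 a (by simp [ha])⟩

lemma mem_takeUntil_getLast {a b : V} {p : G.Walk a b} (hp : p.IsPath) (S : Finset V)
    (hne : p.support.filter (· ∈ S) ≠ [])
    (hc : (p.support.filter (· ∈ S)).getLast hne ∈ p.support)
    {w : V} (hw : w ∈ p.support) (hwS : w ∈ S) :
    w ∈ (p.takeUntil _ hc).support := by
  set c := (p.support.filter (· ∈ S)).getLast hne with hcdef
  have hspec := SimpleGraph.Walk.take_spec p hc
  have hsup : p.support = (p.takeUntil c hc).support ++ (p.dropUntil c hc).support.tail := by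
    conv_lhs => rw [← hspec]
    rw [SimpleGraph.Walk.support_append]
  have hnodup := hp.support_nodup
  rw [hsup] at hnodup
  have hcsome : p.support.filter (· ∈ S) ≠ [] := hne
  have h2 : ((p.dropUntil c hc).support.tail).filter (· ∈ S) = [] := by
    by_contra hne2
    have hfilt : p.support.filter (· ∈ S) =
        ((p.takeUntil c hc).support).filter (· ∈ S) ++
        ((p.dropUntil c hc).support.tail).filter (· ∈ S) := by
      rw [hsup, List.filter_append]
    have hl? : (p.support.filter (· ∈ S)).getLast? = some c :=
      List.getLast?_eq_getLast_of_ne_nil hne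
    rw [hfilt, List.getLast?_append_of_ne_nil _ hne2] at hl?
    have hcmem : c ∈ ((p.dropUntil c hc).support.tail).filter (· ∈ S) :=
      List.mem_of_getLast? hl?
    have hcmem' : c ∈ (p.dropUntil c hc).support.tail := List.mem_of_mem_filter hcmem
    have hcfst : c ∈ (p.takeUntil c hc).support := SimpleGraph.Walk.end_mem_support _
    exact (List.disjoint_of_nodup_append hnodup) hcfst hcmem'
  rw [hsup, List.mem_append] at hw
  rcases hw with h | h
  · exact h
  · exfalso
    have : w ∈ ((p.dropUntil c hc).support.tail).filter (· ∈ S) :=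
      List.mem_filter.2 ⟨h, by simpa using hwS⟩
    rw [h2] at this
    exact absurd this (List.not_mem_nil (a := w))

/-- The code of a set `S`: for each vertex `u`, the last vertex of the canonical path
from `v` to `u` that belongs to `S` (or `v` by default). -/
noncomputable def code (hG : G.IsTree) (v : V) (S : Finset V) (u : V) : V :=
  (((pth hG v u).support.filter (· ∈ S)).getLast?).getD v

lemma code_mem (hG : G.IsTree) {v : V} {S : Finset V} (hvS : v ∈ S) (u : V) :
    code hG v S u ∈ S := by
  unfold code
  rcases eq_or_ne ((pth hG v u).support.filter (· ∈ S)) [] with h | h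
  · rw [h]; simpa using hvS
  · rw [List.getLast?_eq_getLast_of_ne_nil h, Option.getD_some]
    have := (List.mem_filter.1 (List.getLast_mem h)).2
    simpa using this

lemma code_recover (hG : G.IsTree) (hcard : 2 ≤ Fintype.card V) {v : V} {S : Finset V}
    (hvS : v ∈ S)
    (hclosed : ∀ w ∈ S, ∀ a ∈ (pth hG v w).support, a ∈ S) (w : V) :
    w ∈ S ↔ ∃ u, G.degree u = 1 ∧ w ∈ (pth hG v (code hG v S u)).support := by
  constructor
  · intro hwS
    have hrev : (pth hG v w).reverse.IsPath := (pth_isPath hG v w).reverse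
    obtain ⟨u, q, hdeg, hq, hsub⟩ := extend_to_leaf hG hcard (Fintype.card V) w
      (pth hG v w).reverse hrev (by omega)
    have hqr : q.reverse.IsPath := hq.reverse
    have hqe : q.reverse = pth hG v u := eq_pth hG hqr
    have hw0 : w ∈ (pth hG v w).reverse.support := by
      rw [SimpleGraph.Walk.support_reverse, List.mem_reverse]
      exact SimpleGraph.Walk.end_mem_support _
    have hw1 : w ∈ (pth hG v u).support := by
      rw [← hqe, SimpleGraph.Walk.support_reverse, List.mem_reverse]
      exact hsub w hw0
    have hne : (pth hG v u).support.filter (· ∈ S) ≠ [] := by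
      apply List.ne_nil_of_mem (a := v)
      exact List.mem_filter.2 ⟨SimpleGraph.Walk.start_mem_support _, by simpa using hvS⟩
    have hc : ((pth hG v u).support.filter (· ∈ S)).getLast hne ∈ (pth hG v u).support :=
      List.mem_of_mem_filter (List.getLast_mem hne)
    have hcode : code hG v S u = ((pth hG v u).support.filter (· ∈ S)).getLast hne := by
      unfold code
      rw [List.getLast?_eq_getLast_of_ne_nil hne]
      rfl
    have hmem := mem_takeUntil_getLast (pth_isPath hG v u) S hne hc hw1 hwS
    have htu : ((pth hG v u).takeUntil _ hc).IsPath := (pth_isPath hG v u).takeUntil hc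
    have := eq_pth hG htu
    rw [this] at hmem
    refine ⟨u, hdeg, ?_⟩
    rw [hcode]
    exact hmem
  · rintro ⟨u, _, hw⟩
    exact hclosed _ (code_mem hG hvS u) w hw

end Aux

/-- The visited set of the chosen witness walk. -/
noncomputable def wSet {V : Type*} [DecidableEq V] (G : SimpleGraph V) (T : Finset V) (d : V → ℕ) (v : V)
    (Q : Finset V) (h : TreePCS G T d v Q) : Finset V :=
  (Finset.range (h.2.choose + 1)).image h.2.choose_spec.choose

section Aux2
variable {V : Type*} [Fintype V] [DecidableEq V] {G : SimpleGraph V} [DecidableRel G.Adj]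

lemma wSet_spec (hG : G.IsTree) {T : Finset V} {d : V → ℕ} {v : V} {Q : Finset V}
    (h : TreePCS G T d v Q) :
    v ∈ wSet G T d v Q h ∧
    (∀ w ∈ wSet G T d v Q h, ∀ a ∈ (pth hG v w).support, a ∈ wSet G T d v Q h) ∧
    (∀ w, w ∈ Q ↔ w ∈ T ∧ w ∈ wSet G T d v Q h) := by
  obtain ⟨hx0, hadj, hcov, hno⟩ := h.2.choose_spec.choose_spec
  set m := h.2.choose with hm
  set x := h.2.choose_spec.choose with hxd
  have hws : wSet G T d v Q h = (Finset.range (m + 1)).image x := by rw [hm, hxd]; rfl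
  refine ⟨?_, ?_, ?_⟩
  · rw [hws]; exact Finset.mem_image.2 ⟨0, by simp, hx0⟩
  · intro w hw a ha
    rw [hws, Finset.mem_image] at hw
    obtain ⟨j, hj, hxj⟩ := hw
    rw [Finset.mem_range] at hj
    subst hxj
    rw [hws]
    exact support_pth_subset hG hx0 hadj j (by omega) a ha
  · intro w
    constructor
    · intro hwQ
      obtain ⟨j, hj, _, hxj⟩ := hcov w hwQ
      exact ⟨h.1 hwQ, by rw [hws]; exact Finset.mem_image.2 ⟨j, Finset.mem_range.2 (by omega), hxj⟩⟩
    · rintro ⟨hT, hS⟩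
      rw [hws, Finset.mem_image] at hS
      obtain ⟨j, hj, hxj⟩ := hS
      rw [Finset.mem_range] at hj
      subst hxj
      exact hno j (by omega) hT

end Aux2

/-- On a finite tree with exactly `ℓ` leaves, the number of proper covering sets from any
starting vertex `v` is at most `|V| ^ ℓ`. -/
theorem stmt12 {V : Type*} [Fintype V] [DecidableEq V] (G : SimpleGraph V)
    [DecidableRel G.Adj] (hG : G.IsTree)
    (ℓ : ℕ) (hℓ : ℓ = (Finset.univ.filter (fun u => G.degree u = 1)).card)
    (T : Finset V) (d : V → ℕ) (v : V) :
    {Q : Finset V | TreePCS G T d v Q}.encard ≤ ((Fintype.card V ^ ℓ : ℕ) : ℕ∞) := by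
  classical
  have hVne : Nonempty V := ⟨v⟩
  by_cases hcard : Fintype.card V ≤ 1
  · -- subsingleton case
    have hsub : Subsingleton V := Fintype.card_le_one_iff_subsingleton.1 hcard
    have hss : {Q : Finset V | TreePCS G T d v Q}.encard ≤ 1 := by
      rw [Set.encard_le_one_iff]
      intro Q1 Q2 h1 h2
      have key : ∀ Q : Finset V, TreePCS G T d v Q → ∀ w, w ∈ Q ↔ w ∈ T := by
        intro Q hQ w
        obtain ⟨hQT, m, x, hx0, _, _, hno⟩ := hQ
        refine ⟨fun hw => hQT hw, fun hw => ?_⟩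
        have hwv : w = x 0 := Subsingleton.elim w (x 0)
        rw [hwv] at hw ⊢
        exact hno 0 (Nat.zero_le m) hw
      ext w
      rw [key Q1 h1 w, key Q2 h2 w]
    refine le_trans hss ?_
    have : 0 < Fintype.card V ^ ℓ := pow_pos Fintype.card_pos ℓ
    exact_mod_cast this
  · push_neg at hcard
    have hcard2 : 2 ≤ Fintype.card V := hcard
    set L : Finset V := Finset.univ.filter (fun u => G.degree u = 1) with hL
    set f : Finset V → ({u // u ∈ L} → V) := fun Q =>
      if h : TreePCS G T d v Q then (fun u => code hG v (wSet G T d v Q h) u.1)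
      else (fun _ => v) with hf
    have hinj : Set.InjOn f {Q : Finset V | TreePCS G T d v Q} := by
      intro Q1 h1 Q2 h2 hfeq
      rw [Set.mem_setOf_eq] at h1 h2
      have e1 : f Q1 = fun u : {u // u ∈ L} => code hG v (wSet G T d v Q1 h1) u.1 := dif_pos h1
      have e2 : f Q2 = fun u : {u // u ∈ L} => code hG v (wSet G T d v Q2 h2) u.1 := dif_pos h2
      obtain ⟨hv1, hcl1, hQ1⟩ := wSet_spec hG h1
      obtain ⟨hv2, hcl2, hQ2⟩ := wSet_spec hG h2
      have hcodes : ∀ u : V, G.degree u = 1 →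
          code hG v (wSet G T d v Q1 h1) u = code hG v (wSet G T d v Q2 h2) u := by
        intro u hu
        have huL : u ∈ L := by rw [hL]; simp [hu]
        have := congrFun (e1.symm.trans (hfeq.trans e2)) ⟨u, huL⟩
        exact this
      have hSS : wSet G T d v Q1 h1 = wSet G T d v Q2 h2 := by
        ext w
        rw [code_recover hG hcard2 hv1 hcl1 w, code_recover hG hcard2 hv2 hcl2 w]
        constructor
        · rintro ⟨u, hu, hw⟩
          exact ⟨u, hu, by rw [← hcodes u hu]; exact hw⟩
        · rintro ⟨u, hu, hw⟩
          exact ⟨u, hu, by rw [hcodes u hu]; exact hw⟩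
      ext w
      rw [hQ1 w, hQ2 w, hSS]
    calc {Q : Finset V | TreePCS G T d v Q}.encard
        = (f '' {Q : Finset V | TreePCS G T d v Q}).encard := (hinj.encard_image).symm
      _ ≤ (Set.univ : Set ({u // u ∈ L} → V)).encard := Set.encard_mono (Set.subset_univ _)
      _ = ((Fintype.card V ^ ℓ : ℕ) : ℕ∞) := by
          rw [Set.encard_univ, ENat.card_eq_coe_fintype_card]
          congr 1
          rw [Fintype.card_fun, Fintype.card_coe, hℓ]
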